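/- arXiv:2002.10628 — 2 statements merged into one kernel-verified Lean document; each statement's English description precedes it below -/
import Mathlib

section
/- The triple with u₁ = ½ min{x·e,0}² + ¼ max{x·e,0}², u₂ = -¼ min{x·e,0}² + ¼ max{x·e,0}², u₃ = -¼ min{x·e,0}² - ½ max{x·e,0}² (for a unit vector e ∈ ℝᵈ) is a solution to the 3-membrane problem with forces (1,0,-1) on ℝᵈ, i.e., u₁+u₂+u₃=0, u₁ ≥ u₂ ≥ u₃, and Δu₁ = 𝟙_{u₁>u₂} + ½𝟙_{u₁=u₂>u₃}, Δu₂ = ½𝟙_{u₁=u₂>u₃} - ½𝟙_{u₁>u₂=u₃}, Δu₃ = -𝟙_{u₂>u₃} - ½𝟙_{u₁>u₂=u₃}. -/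
open MeasureTheory Metric

noncomputable def lap {d : ℕ} (f : EuclideanSpace ℝ (Fin d) → ℝ) (x : EuclideanSpace ℝ (Fin d)) : ℝ :=
  ∑ i : Fin d, fderiv ℝ (fun y => fderiv ℝ f y (EuclideanSpace.single i 1)) x (EuclideanSpace.single i 1)

def HasDistribLapOn {d : ℕ} (u f : EuclideanSpace ℝ (Fin d) → ℝ)
    (Ω : Set (EuclideanSpace ℝ (Fin d))) : Prop :=
  ∀ φ : EuclideanSpace ℝ (Fin d) → ℝ, ContDiff ℝ (⊤ : ℕ∞) φ → HasCompactSupport φ →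
    tsupport φ ⊆ Ω → ∫ x, u x * lap φ x = ∫ x, f x * φ x

/-- A triple of continuous functions is a solution to the 3-membrane problem with
forces (1,0,-1) on `Ω`: sum zero, ordered, and the Euler–Lagrange system holds
in the sense of distributions. -/
def IsMembraneSolution {d : ℕ} (u₁ u₂ u₃ : EuclideanSpace ℝ (Fin d) → ℝ)
    (Ω : Set (EuclideanSpace ℝ (Fin d))) : Prop :=
  Continuous u₁ ∧ Continuous u₂ ∧ Continuous u₃ ∧
  (∀ x ∈ Ω, u₁ x + u₂ x + u₃ x = 0) ∧
  (∀ x ∈ Ω, u₂ x ≤ u₁ x) ∧ (∀ x ∈ Ω, u₃ x ≤ u₂ x) ∧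
  HasDistribLapOn u₁
    (fun x => (if u₂ x < u₁ x then (1:ℝ) else 0)
      + (1/2) * (if u₁ x = u₂ x ∧ u₃ x < u₂ x then 1 else 0)) Ω ∧
  HasDistribLapOn u₂
    (fun x => (1/2) * (if u₁ x = u₂ x ∧ u₃ x < u₂ x then (1:ℝ) else 0)
      - (1/2) * (if u₂ x < u₁ x ∧ u₂ x = u₃ x then 1 else 0)) Ω ∧
  HasDistribLapOn u₃
    (fun x => -(if u₃ x < u₂ x then (1:ℝ) else 0)
      - (1/2) * (if u₂ x < u₁ x ∧ u₂ x = u₃ x then 1 else 0)) Ω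


open Function Set

section Aux1D

lemma aux_deriv_smooth {ψ : ℝ → ℝ} (hψ : ContDiff ℝ (⊤:ℕ∞) ψ) : ContDiff ℝ (⊤:ℕ∞) (deriv ψ) :=
  (contDiff_infty_iff_deriv.mp hψ).2

lemma aux_hasDerivAt {ψ : ℝ → ℝ} (hψ : ContDiff ℝ (⊤:ℕ∞) ψ) (s : ℝ) :
    HasDerivAt ψ (deriv ψ s) s :=
  ((hψ.differentiable (by simp)) s).hasDerivAt

lemma exists_bound (f : ℝ → ℝ) (h : HasCompactSupport f) (a : ℝ) :
    ∃ R : ℝ, |a| < R ∧ tsupport f ⊆ Set.Ioo (-R) R := by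
  obtain ⟨M, hM0, hMs⟩ := h.isBounded.subset_closedBall_lt |a| 0
  refine ⟨M + 1, by linarith, fun x hx => ?_⟩
  have hx' := hMs hx
  rw [Real.closedBall_eq_Icc, zero_sub, zero_add] at hx'
  exact ⟨by linarith [hx'.1], by linarith [hx'.2]⟩

lemma integral_deriv_eq_zero' {f : ℝ → ℝ} (hf : ContDiff ℝ (⊤:ℕ∞) f)
    (h : HasCompactSupport f) : ∫ s, deriv f s = 0 := by
  obtain ⟨R, hR, hsub⟩ := exists_bound f h 0
  rw [abs_zero] at hR
  have h0 : ∀ s, s ∉ Set.Ioc (-R) R → deriv f s = 0 := by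
    intro s hs
    by_contra hne
    exact hs (Set.Ioo_subset_Ioc_self (hsub (support_deriv_subset (by simpa using hne))))
  rw [← setIntegral_eq_integral_of_forall_compl_eq_zero h0,
    ← intervalIntegral.integral_of_le (by linarith : -R ≤ R),
    intervalIntegral.integral_deriv_eq_sub (fun x _ => (hf.differentiable (by simp)) x)
      ((aux_deriv_smooth hf).continuous.intervalIntegrable _ _)]
  have h1 : f R = 0 := image_eq_zero_of_notMem_tsupport (fun hc => by
    have := (hsub hc).2; linarith)
  have h2 : f (-R) = 0 := image_eq_zero_of_notMem_tsupport (fun hc => by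
    have := (hsub hc).1; linarith)
  rw [h1, h2, sub_zero]

lemma oneD_pos {ψ : ℝ → ℝ} (c ε : ℝ) (hε : 0 < ε)
    (hψ : ContDiff ℝ (⊤:ℕ∞) ψ) (hsupp : HasCompactSupport ψ) :
    ∫ s, max (c + ε * s) 0 ^ 2 * deriv (deriv ψ) s
      = ∫ s, 2 * ε ^ 2 * (if 0 < c + ε * s then (1:ℝ) else 0) * ψ s := by
  have hψ1 : ContDiff ℝ (⊤:ℕ∞) (deriv ψ) := aux_deriv_smooth hψ
  have hψ2c : Continuous (deriv (deriv ψ)) := (aux_deriv_smooth hψ1).continuous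
  have hψ1c : Continuous (deriv ψ) := hψ1.continuous
  have hψc : Continuous ψ := hψ.continuous
  set r : ℝ := -c / ε with hrdef
  have hcr : c + ε * r = 0 := by rw [hrdef]; field_simp; ring
  obtain ⟨R, hrR, hsub⟩ := exists_bound ψ hsupp r
  have h1 : -R < r := by cases abs_lt.mp hrR; linarith
  have h2 : r < R := by cases abs_lt.mp hrR; linarith
  -- vanishing facts
  have hts : tsupport (deriv ψ) ⊆ tsupport ψ :=
    closure_minimal support_deriv_subset (isClosed_tsupport ψ)
  have hdd0 : ∀ s, s ∉ Set.Ioo (-R) R → deriv (deriv ψ) s = 0 := by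
    intro s hs
    by_contra hne
    exact hs (hsub (hts (support_deriv_subset (by simpa using hne))))
  have hd0 : ∀ s, s ∉ Set.Ioo (-R) R → deriv ψ s = 0 := by
    intro s hs
    by_contra hne
    exact hs (hsub (support_deriv_subset (by simpa using hne)))
  have hz : ∀ s, s ∉ Set.Ioo (-R) R → ψ s = 0 := fun s hs =>
    image_eq_zero_of_notMem_tsupport (fun hc => hs (hsub hc))
  have hRout : (R : ℝ) ∉ Set.Ioo (-R) R := fun hc => lt_irrefl R hc.2
  -- LHS to interval integral
  have hL0 : ∀ s, s ∉ Set.Ioc (-R) R → max (c + ε * s) 0 ^ 2 * deriv (deriv ψ) s = 0 := by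
    intro s hs
    rw [hdd0 s (fun hc => hs (Set.Ioo_subset_Ioc_self hc)), mul_zero]
  have hmaxc : Continuous fun s : ℝ => max (c + ε * s) 0 ^ 2 :=
    ((continuous_const.add (continuous_const.mul continuous_id)).max continuous_const).pow 2
  rw [← setIntegral_eq_integral_of_forall_compl_eq_zero hL0,
    ← intervalIntegral.integral_of_le (by linarith : -R ≤ R),
    ← intervalIntegral.integral_add_adjacent_intervals (b := r)
      (f := fun s => max (c + ε * s) 0 ^ 2 * deriv (deriv ψ) s)
      ((hmaxc.mul hψ2c).intervalIntegrable _ _) ((hmaxc.mul hψ2c).intervalIntegrable _ _)]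
  -- first piece is zero
  have hpiece1 : (∫ s in (-R)..r, max (c + ε * s) 0 ^ 2 * deriv (deriv ψ) s) = 0 := by
    rw [intervalIntegral.integral_congr (g := fun _ => (0:ℝ))]
    · simp
    · intro s hs
      rw [Set.uIcc_of_le (by linarith : -R ≤ r)] at hs
      have : c + ε * s ≤ 0 := by nlinarith [hs.2]
      simp [max_eq_right this]
  -- second piece via integration by parts
  have hG : ∀ s : ℝ, HasDerivAt (fun s => (c + ε * s) ^ 2) (2 * ε * (c + ε * s)) s := by
    intro s
    have h0 : HasDerivAt (fun s : ℝ => c + ε * s) ε s := by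
      simpa using ((hasDerivAt_id s).const_mul ε).const_add c
    have := h0.pow 2
    exact this.congr_deriv (by ring)
  have hG' : ∀ s : ℝ, HasDerivAt (fun s => 2 * ε * (c + ε * s)) (2 * ε ^ 2) s := by
    intro s
    have h0 : HasDerivAt (fun s : ℝ => c + ε * s) ε s := by
      simpa using ((hasDerivAt_id s).const_mul ε).const_add c
    have := h0.const_mul (2 * ε)
    exact this.congr_deriv (by ring)
  have hpiece2 : (∫ s in r..R, max (c + ε * s) 0 ^ 2 * deriv (deriv ψ) s)
      = ∫ s in r..R, 2 * ε ^ 2 * ψ s := by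
    rw [intervalIntegral.integral_congr (g := fun s => (c + ε * s) ^ 2 * deriv (deriv ψ) s)
      (by
        intro s hs
        rw [Set.uIcc_of_le (by linarith : r ≤ R)] at hs
        have : 0 ≤ c + ε * s := by nlinarith [hs.1]
        simp [max_eq_left this])]
    rw [intervalIntegral.integral_mul_deriv_eq_deriv_mul (fun x _ => hG x)
      (fun x _ => aux_hasDerivAt hψ1 x)
      ((continuous_const.mul (continuous_const.add (continuous_const.mul continuous_id))).intervalIntegrable _ _)
      (hψ2c.intervalIntegrable _ _)]
    rw [hd0 R hRout, hcr]
    rw [intervalIntegral.integral_mul_deriv_eq_deriv_mul (fun x _ => hG' x)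
      (fun x _ => aux_hasDerivAt hψ x)
      (continuous_const.intervalIntegrable _ _)
      (hψ1c.intervalIntegrable _ _)]
    rw [hz R hRout, hcr]
    ring_nf
  rw [hpiece1, hpiece2, zero_add]
  -- RHS
  have hR0 : ∀ s, s ∉ Set.Ioc r R →
      2 * ε ^ 2 * (if 0 < c + ε * s then (1:ℝ) else 0) * ψ s = 0 := by
    intro s hs
    by_cases hψs : ψ s = 0
    · rw [hψs, mul_zero]
    · have hmem : s ∈ Set.Ioo (-R) R := by
        by_contra hc
        exact hψs (hz s hc)
      have hsr : s ≤ r := by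
        by_contra hc
        exact hs ⟨lt_of_not_ge hc, hmem.2.le⟩
      have : ¬ (0 < c + ε * s) := by nlinarith
      simp [this]
  rw [← setIntegral_eq_integral_of_forall_compl_eq_zero hR0,
    ← intervalIntegral.integral_of_le (by linarith : r ≤ R)]
  rw [intervalIntegral.integral_of_le (by linarith : r ≤ R),
    intervalIntegral.integral_of_le (by linarith : r ≤ R)]
  refine setIntegral_congr_fun measurableSet_Ioc (fun s hs => ?_)
  have : 0 < c + ε * s := by nlinarith [hs.1]
  simp [this]

lemma oneD {ψ : ℝ → ℝ} (c ε : ℝ)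
    (hψ : ContDiff ℝ (⊤:ℕ∞) ψ) (hsupp : HasCompactSupport ψ) :
    ∫ s, max (c + ε * s) 0 ^ 2 * deriv (deriv ψ) s
      = ∫ s, 2 * ε ^ 2 * (if 0 < c + ε * s then (1:ℝ) else 0) * ψ s := by
  rcases lt_trichotomy ε 0 with hε | rfl | hε
  · -- substitute s ↦ -s and use the positive case
    set χ : ℝ → ℝ := fun s => ψ (-s) with hχdef
    have hχ : ContDiff ℝ (⊤:ℕ∞) χ := hψ.comp (contDiff_id.neg)
    have hχs : HasCompactSupport χ := hsupp.comp_homeomorph (Homeomorph.neg ℝ)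
    have hψ1 : ContDiff ℝ (⊤:ℕ∞) (deriv ψ) := aux_deriv_smooth hψ
    have hd1 : deriv χ = fun s => -deriv ψ (-s) := by
      funext s
      have h0 : HasDerivAt χ (deriv ψ (-s) * (-1)) s :=
        (aux_hasDerivAt hψ (-s)).comp s (hasDerivAt_neg s)
      rw [h0.deriv]; ring
    have hd2 : ∀ s, deriv (deriv χ) s = deriv (deriv ψ) (-s) := by
      intro s
      rw [hd1]
      have h0 : HasDerivAt (fun s : ℝ => -deriv ψ (-s)) (deriv (deriv ψ) (-s)) s := by
        have := ((aux_hasDerivAt hψ1 (-s)).comp s (hasDerivAt_neg s)).neg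
        simp at this; exact this
      rw [h0.deriv]
    have key := oneD_pos c (-ε) (by linarith) hχ hχs
    have hfun : (fun s : ℝ => max (c + -ε * s) 0 ^ 2 * deriv (deriv χ) s)
        = fun s : ℝ => (fun u : ℝ => max (c + ε * u) 0 ^ 2 * deriv (deriv ψ) u) (-s) := by
      funext s
      show max (c + -ε * s) 0 ^ 2 * deriv (deriv χ) s
          = max (c + ε * (-s)) 0 ^ 2 * deriv (deriv ψ) (-s)
      rw [hd2 s, show c + -ε * s = c + ε * (-s) from by ring]
    have hfun2 : (fun s : ℝ => 2 * (-ε) ^ 2 * (if 0 < c + -ε * s then (1:ℝ) else 0) * χ s)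
        = fun s : ℝ => (fun u : ℝ => 2 * ε ^ 2 * (if 0 < c + ε * u then (1:ℝ) else 0) * ψ u) (-s) := by
      funext s
      show 2 * (-ε) ^ 2 * (if 0 < c + -ε * s then (1:ℝ) else 0) * χ s
          = 2 * ε ^ 2 * (if 0 < c + ε * (-s) then (1:ℝ) else 0) * ψ (-s)
      rw [neg_sq, show c + -ε * s = c + ε * (-s) from by ring]
    calc ∫ s, max (c + ε * s) 0 ^ 2 * deriv (deriv ψ) s
        = ∫ s, max (c + -ε * s) 0 ^ 2 * deriv (deriv χ) s := by
          rw [hfun]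
          exact (integral_neg_eq_self _ volume).symm
      _ = ∫ s, 2 * (-ε) ^ 2 * (if 0 < c + -ε * s then (1:ℝ) else 0) * χ s := key
      _ = ∫ s, 2 * ε ^ 2 * (if 0 < c + ε * s then (1:ℝ) else 0) * ψ s := by
          rw [hfun2]
          exact integral_neg_eq_self (fun u : ℝ => 2 * ε ^ 2 * (if 0 < c + ε * u then (1:ℝ) else 0) * ψ u) volume
  · simp only [zero_mul, add_zero, ne_eq, OfNat.ofNat_ne_zero, not_false_eq_true, zero_pow,
      mul_zero, zero_mul, integral_zero]
    rw [integral_const_mul, integral_deriv_eq_zero' (aux_deriv_smooth hψ) hsupp.deriv, mul_zero]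
  · exact oneD_pos c ε hε hψ hsupp

end Aux1D

section AuxDim
variable {d : ℕ}

lemma fderiv_apply_contDiff {φ : EuclideanSpace ℝ (Fin d) → ℝ} (hφ : ContDiff ℝ (⊤:ℕ∞) φ)
    (v : EuclideanSpace ℝ (Fin d)) : ContDiff ℝ (⊤:ℕ∞) (fun y => fderiv ℝ φ y v) :=
  (hφ.fderiv_right (by exact_mod_cast le_top)).clm_apply contDiff_const

lemma fderiv_apply_supp {φ : EuclideanSpace ℝ (Fin d) → ℝ} (hφs : HasCompactSupport φ)
    (v : EuclideanSpace ℝ (Fin d)) : HasCompactSupport (fun y => fderiv ℝ φ y v) :=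
  (hφs.fderiv (𝕜 := ℝ)).comp_left (g := fun L : EuclideanSpace ℝ (Fin d) →L[ℝ] ℝ => L v) rfl

lemma slice_contDiff {φ : EuclideanSpace ℝ (Fin d) → ℝ} (hφ : ContDiff ℝ (⊤:ℕ∞) φ)
    (x₀ v : EuclideanSpace ℝ (Fin d)) : ContDiff ℝ (⊤:ℕ∞) (fun s : ℝ => φ (x₀ + s • v)) :=
  hφ.comp (contDiff_const.add (contDiff_id.smul contDiff_const))

lemma slice_supp {φ : EuclideanSpace ℝ (Fin d) → ℝ} (hφs : HasCompactSupport φ)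
    (x₀ v : EuclideanSpace ℝ (Fin d)) (hv : v ≠ 0) :
    HasCompactSupport (fun s : ℝ => φ (x₀ + s • v)) := by
  obtain ⟨M, hM0, hMs⟩ := hφs.isBounded.subset_closedBall_lt 0 0
  have hv' : 0 < ‖v‖ := norm_pos_iff.mpr hv
  refine HasCompactSupport.intro (isCompact_Icc
    (a := -((M + ‖x₀‖)/‖v‖)) (b := (M + ‖x₀‖)/‖v‖)) (fun s hs => ?_)
  by_contra h
  have hmem : x₀ + s • v ∈ Metric.closedBall 0 M := hMs (subset_tsupport _ h)
  rw [mem_closedBall_zero_iff] at hmem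
  have h1 : |s| * ‖v‖ ≤ M + ‖x₀‖ := by
    have h2 : ‖s • v‖ ≤ ‖x₀ + s • v‖ + ‖x₀‖ := by
      have := norm_sub_le (x₀ + s • v) x₀
      simpa using this
    rw [norm_smul, Real.norm_eq_abs] at h2
    linarith
  have h3 : |s| ≤ (M + ‖x₀‖)/‖v‖ := by
    rw [le_div_iff₀ hv']
    exact h1
  exact hs ⟨neg_le_of_abs_le h3, le_of_abs_le h3⟩

lemma slice_deriv {φ : EuclideanSpace ℝ (Fin d) → ℝ} (hφ : ContDiff ℝ (⊤:ℕ∞) φ)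
    (x₀ v : EuclideanSpace ℝ (Fin d)) :
    deriv (fun s : ℝ => φ (x₀ + s • v)) = fun s => fderiv ℝ φ (x₀ + s • v) v := by
  funext s
  have hline : HasDerivAt (fun s : ℝ => x₀ + s • v) v s := by
    simpa using ((hasDerivAt_id s).smul_const v).const_add x₀
  exact (((hφ.differentiable (by simp)) _).hasFDerivAt.comp_hasDerivAt s hline).deriv

lemma slice_deriv2 {φ : EuclideanSpace ℝ (Fin d) → ℝ} (hφ : ContDiff ℝ (⊤:ℕ∞) φ)
    (x₀ v : EuclideanSpace ℝ (Fin d)) :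
    deriv (deriv (fun s : ℝ => φ (x₀ + s • v)))
      = fun s => fderiv ℝ (fun y => fderiv ℝ φ y v) (x₀ + s • v) v := by
  rw [slice_deriv hφ x₀ v]
  exact slice_deriv (fderiv_apply_contDiff hφ v) x₀ v

variable {m : ℕ}

lemma insertNth_eq (i : Fin (m+1)) (s : ℝ) (y : Fin m → ℝ) :
    (MeasurableEquiv.toLp 2 (Fin (m+1) → ℝ)) (i.insertNth s y)
      = (MeasurableEquiv.toLp 2 (Fin (m+1) → ℝ)) (i.insertNth 0 y)
        + s • EuclideanSpace.single i (1:ℝ) := by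
  apply PiLp.ext
  intro j
  simp only [MeasurableEquiv.toLp_apply, PiLp.add_apply, PiLp.smul_apply,
    PiLp.toLp_apply, EuclideanSpace.single_apply, smul_eq_mul]
  refine Fin.succAboveCases i ?_ ?_ j
  · simp [Fin.insertNth_apply_same]
  · intro k
    simp [Fin.insertNth_apply_succAbove, (Fin.succAbove_ne i k)]

lemma fubini_coord (i : Fin (m+1)) (F : EuclideanSpace ℝ (Fin (m+1)) → ℝ)
    (hF : Integrable F) :
    ∫ x, F x = ∫ y : Fin m → ℝ, ∫ s : ℝ,
      F ((MeasurableEquiv.toLp 2 (Fin (m+1) → ℝ)) (i.insertNth s y)) := by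
  have hmp : MeasurePreserving
      (((MeasurableEquiv.piFinSuccAbove (fun _ : Fin (m+1) => ℝ) i).symm).trans
        (MeasurableEquiv.toLp 2 (Fin (m+1) → ℝ)))
      (volume : Measure (ℝ × (Fin m → ℝ))) volume :=
    ((EuclideanSpace.volume_preserving_symm_measurableEquiv_toLp _).symm).comp
      ((volume_preserving_piFinSuccAbove (fun _ : Fin (m+1) => ℝ) i).symm)
  rw [← hmp.integral_comp']
  have hint : Integrable (F ∘ (((MeasurableEquiv.piFinSuccAbove (fun _ : Fin (m+1) => ℝ) i).symm).trans
        (MeasurableEquiv.toLp 2 (Fin (m+1) → ℝ)))) (volume : Measure (ℝ × (Fin m → ℝ))) :=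
    (hmp.integrable_comp_emb (MeasurableEquiv.measurableEmbedding _)).mpr hF
  rw [show (volume : Measure (ℝ × (Fin m → ℝ))) = (volume : Measure ℝ).prod volume from rfl] at hint ⊢
  exact integral_prod_symm _ hint

lemma coreMax (e : EuclideanSpace ℝ (Fin (m+1))) (he : ‖e‖ = 1)
    (φ : EuclideanSpace ℝ (Fin (m+1)) → ℝ) (hφ : ContDiff ℝ (⊤:ℕ∞) φ)
    (hφs : HasCompactSupport φ) :
    ∫ x, max (inner ℝ x e : ℝ) 0 ^ 2 * lap φ x
      = ∫ x, 2 * (if 0 < (inner ℝ x e : ℝ) then (1:ℝ) else 0) * φ x := by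
  have hic : Continuous fun x : EuclideanSpace ℝ (Fin (m+1)) => (inner ℝ x e : ℝ) :=
    continuous_id.inner continuous_const
  have hmaxc : Continuous fun x : EuclideanSpace ℝ (Fin (m+1)) => max (inner ℝ x e : ℝ) 0 ^ 2 :=
    (hic.max continuous_const).pow 2
  have hDc : ∀ i : Fin (m+1), Continuous (fun x => fderiv ℝ
      (fun y => fderiv ℝ φ y (EuclideanSpace.single i (1:ℝ))) x (EuclideanSpace.single i (1:ℝ))) :=
    fun i => (fderiv_apply_contDiff (fderiv_apply_contDiff hφ _) _).continuous
  have hDs : ∀ i : Fin (m+1), HasCompactSupport (fun x => fderiv ℝ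
      (fun y => fderiv ℝ φ y (EuclideanSpace.single i (1:ℝ))) x (EuclideanSpace.single i (1:ℝ))) :=
    fun i => fderiv_apply_supp (fderiv_apply_supp hφs _) _
  have hint1 : ∀ i : Fin (m+1), Integrable (fun x => max (inner ℝ x e : ℝ) 0 ^ 2 * fderiv ℝ
      (fun y => fderiv ℝ φ y (EuclideanSpace.single i (1:ℝ))) x (EuclideanSpace.single i (1:ℝ))) :=
    fun i => (hmaxc.mul (hDc i)).integrable_of_hasCompactSupport ((hDs i).mul_left)
  have hGint : ∀ i : Fin (m+1), Integrable (fun x => 2 * (e i) ^ 2 *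
      (if 0 < (inner ℝ x e : ℝ) then (1:ℝ) else 0) * φ x) := by
    intro i
    have hopen : MeasurableSet {x : EuclideanSpace ℝ (Fin (m+1)) | 0 < (inner ℝ x e : ℝ)} :=
      (isOpen_lt continuous_const hic).measurableSet
    have h1 : Integrable (fun x : EuclideanSpace ℝ (Fin (m+1)) => 2 * (e i) ^ 2 * φ x) :=
      (continuous_const.mul hφ.continuous).integrable_of_hasCompactSupport hφs.mul_left
    refine (h1.indicator hopen).congr ?_
    filter_upwards with x
    rw [Set.indicator_apply]
    by_cases h : 0 < (inner ℝ x e : ℝ) <;> simp [h]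
  have key : ∀ i : Fin (m+1), ∫ x, max (inner ℝ x e : ℝ) 0 ^ 2 * fderiv ℝ
      (fun y => fderiv ℝ φ y (EuclideanSpace.single i (1:ℝ))) x (EuclideanSpace.single i (1:ℝ))
      = ∫ x, 2 * (e i) ^ 2 * (if 0 < (inner ℝ x e : ℝ) then (1:ℝ) else 0) * φ x := by
    intro i
    rw [fubini_coord i _ (hint1 i), fubini_coord i _ (hGint i)]
    refine integral_congr_ae (Filter.Eventually.of_forall fun y => ?_)
    have hvne : EuclideanSpace.single i (1:ℝ) ≠ 0 := by
      intro h0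
      have h1 : EuclideanSpace.single i (1:ℝ) i = 1 := by simp
      rw [h0] at h1
      simp at h1
    set X : EuclideanSpace ℝ (Fin (m+1)) :=
      (MeasurableEquiv.toLp 2 (Fin (m+1) → ℝ)) (i.insertNth 0 y) with hXdef
    have hψ := slice_contDiff hφ X (EuclideanSpace.single i (1:ℝ))
    have hψs := slice_supp hφs X (EuclideanSpace.single i (1:ℝ)) hvne
    have hinner : ∀ s : ℝ, (inner ℝ (X + s • EuclideanSpace.single i (1:ℝ)) e : ℝ)
        = (inner ℝ X e : ℝ) + e i * s := by
      intro s
      rw [inner_add_left, real_inner_smul_left]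
      have : (inner ℝ (EuclideanSpace.single i (1:ℝ)) e : ℝ) = e i := by
        rw [EuclideanSpace.inner_single_left]
        simp
      rw [this]
      ring
    have hD2 := slice_deriv2 hφ X (EuclideanSpace.single i (1:ℝ))
    calc (∫ s : ℝ, max (inner ℝ ((MeasurableEquiv.toLp 2 (Fin (m+1) → ℝ)) (i.insertNth s y)) e : ℝ) 0 ^ 2
          * fderiv ℝ (fun y' => fderiv ℝ φ y' (EuclideanSpace.single i (1:ℝ)))
            ((MeasurableEquiv.toLp 2 (Fin (m+1) → ℝ)) (i.insertNth s y)) (EuclideanSpace.single i (1:ℝ)))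
        = ∫ s : ℝ, max ((inner ℝ X e : ℝ) + e i * s) 0 ^ 2
            * deriv (deriv (fun s : ℝ => φ (X + s • EuclideanSpace.single i (1:ℝ)))) s := by
          refine integral_congr_ae (Filter.Eventually.of_forall fun s => ?_)
          beta_reduce
          rw [insertNth_eq i s y, ← hXdef, hinner s, hD2]
      _ = ∫ s : ℝ, 2 * (e i) ^ 2 * (if 0 < (inner ℝ X e : ℝ) + e i * s then (1:ℝ) else 0)
            * φ (X + s • EuclideanSpace.single i (1:ℝ)) := oneD _ _ hψ hψs
      _ = ∫ s : ℝ, 2 * (e i) ^ 2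
            * (if 0 < (inner ℝ ((MeasurableEquiv.toLp 2 (Fin (m+1) → ℝ)) (i.insertNth s y)) e : ℝ) then (1:ℝ) else 0)
            * φ ((MeasurableEquiv.toLp 2 (Fin (m+1) → ℝ)) (i.insertNth s y)) := by
          refine integral_congr_ae (Filter.Eventually.of_forall fun s => ?_)
          beta_reduce
          rw [insertNth_eq i s y, ← hXdef, hinner s]
  have hsum : ∑ i : Fin (m+1), (e i) ^ 2 = 1 := by
    have h2 : ‖e‖ ^ 2 = 1 := by rw [he]; norm_num
    rw [EuclideanSpace.norm_eq, Real.sq_sqrt (by positivity)] at h2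
    simpa [Real.norm_eq_abs, sq_abs] using h2
  calc ∫ x, max (inner ℝ x e : ℝ) 0 ^ 2 * lap φ x
      = ∫ x, ∑ i : Fin (m+1), max (inner ℝ x e : ℝ) 0 ^ 2 * fderiv ℝ
          (fun y => fderiv ℝ φ y (EuclideanSpace.single i (1:ℝ))) x (EuclideanSpace.single i (1:ℝ)) := by
        refine integral_congr_ae (Filter.Eventually.of_forall fun x => ?_)
        beta_reduce
        unfold lap
        rw [Finset.mul_sum]
    _ = ∑ i : Fin (m+1), ∫ x, max (inner ℝ x e : ℝ) 0 ^ 2 * fderiv ℝ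
          (fun y => fderiv ℝ φ y (EuclideanSpace.single i (1:ℝ))) x (EuclideanSpace.single i (1:ℝ)) :=
        integral_finset_sum _ (fun i _ => hint1 i)
    _ = ∑ i : Fin (m+1), ∫ x, 2 * (e i) ^ 2 * (if 0 < (inner ℝ x e : ℝ) then (1:ℝ) else 0) * φ x := by
        exact Finset.sum_congr rfl (fun i _ => key i)
    _ = ∫ x, ∑ i : Fin (m+1), 2 * (e i) ^ 2 * (if 0 < (inner ℝ x e : ℝ) then (1:ℝ) else 0) * φ x :=
        (integral_finset_sum _ (fun i _ => hGint i)).symm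
    _ = ∫ x, 2 * (if 0 < (inner ℝ x e : ℝ) then (1:ℝ) else 0) * φ x := by
        refine integral_congr_ae (Filter.Eventually.of_forall fun x => ?_)
        beta_reduce
        rw [← Finset.sum_mul, ← Finset.sum_mul, ← Finset.mul_sum, hsum, mul_one]

lemma coreMin (e : EuclideanSpace ℝ (Fin (m+1))) (he : ‖e‖ = 1)
    (φ : EuclideanSpace ℝ (Fin (m+1)) → ℝ) (hφ : ContDiff ℝ (⊤:ℕ∞) φ)
    (hφs : HasCompactSupport φ) :
    ∫ x, min (inner ℝ x e : ℝ) 0 ^ 2 * lap φ x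
      = ∫ x, 2 * (if (inner ℝ x e : ℝ) < 0 then (1:ℝ) else 0) * φ x := by
  have hneg : ‖(-e : EuclideanSpace ℝ (Fin (m+1)))‖ = 1 := by rw [norm_neg, he]
  have key := coreMax (-e) hneg φ hφ hφs
  have h1 : ∀ t : ℝ, min t 0 ^ 2 = max (-t) 0 ^ 2 := by
    intro t
    rcases le_total t 0 with h | h
    · rw [min_eq_left h, max_eq_left (by linarith : (0:ℝ) ≤ -t), neg_pow]
      norm_num
    · rw [min_eq_right h, max_eq_right (by linarith : -t ≤ (0:ℝ))]
  calc ∫ x, min (inner ℝ x e : ℝ) 0 ^ 2 * lap φ x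
      = ∫ x, max (inner ℝ x (-e) : ℝ) 0 ^ 2 * lap φ x := by
        refine integral_congr_ae (Filter.Eventually.of_forall fun x => ?_)
        beta_reduce
        rw [inner_neg_right, ← h1]
    _ = ∫ x, 2 * (if 0 < (inner ℝ x (-e) : ℝ) then (1:ℝ) else 0) * φ x := key
    _ = ∫ x, 2 * (if (inner ℝ x e : ℝ) < 0 then (1:ℝ) else 0) * φ x := by
        refine integral_congr_ae (Filter.Eventually.of_forall fun x => ?_)
        simp only [inner_neg_right, neg_pos]

lemma combo (e : EuclideanSpace ℝ (Fin (m+1))) (he : ‖e‖ = 1) (a b : ℝ)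
    (φ : EuclideanSpace ℝ (Fin (m+1)) → ℝ) (hφ : ContDiff ℝ (⊤:ℕ∞) φ)
    (hφs : HasCompactSupport φ) :
    ∫ x, (a * min (inner ℝ x e : ℝ) 0 ^ 2 + b * max (inner ℝ x e : ℝ) 0 ^ 2) * lap φ x
      = ∫ x, (2 * a * (if (inner ℝ x e : ℝ) < 0 then (1:ℝ) else 0)
          + 2 * b * (if 0 < (inner ℝ x e : ℝ) then (1:ℝ) else 0)) * φ x := by
  have hic : Continuous fun x : EuclideanSpace ℝ (Fin (m+1)) => (inner ℝ x e : ℝ) :=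
    continuous_id.inner continuous_const
  have hlapc : Continuous (lap φ) :=
    continuous_finset_sum _ fun i _ => (fderiv_apply_contDiff (fderiv_apply_contDiff hφ _) _).continuous
  have hstep : ∀ (g : EuclideanSpace ℝ (Fin (m+1)) → ℝ) (v : EuclideanSpace ℝ (Fin (m+1))),
      support (fun x => fderiv ℝ g x v) ⊆ tsupport g := by
    intro g v x hx
    refine support_fderiv_subset ℝ (fun h0 => hx ?_)
    show fderiv ℝ g x v = 0
    rw [h0]
    rfl
  have hlaps : HasCompactSupport (lap φ) := by
    refine hφs.mono' ?_
    intro x hx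
    have hx' : (∑ i : Fin (m+1), fderiv ℝ (fun y => fderiv ℝ φ y (EuclideanSpace.single i 1)) x
        (EuclideanSpace.single i 1)) ≠ 0 := hx
    obtain ⟨i, -, hne⟩ := Finset.exists_ne_zero_of_sum_ne_zero hx'
    exact closure_minimal (hstep φ (EuclideanSpace.single i (1:ℝ))) (isClosed_tsupport φ)
      (hstep _ _ hne)
  have i1 : Integrable (fun x => min (inner ℝ x e : ℝ) 0 ^ 2 * lap φ x) :=
    (((hic.min continuous_const).pow 2).mul hlapc).integrable_of_hasCompactSupport hlaps.mul_left
  have i2 : Integrable (fun x => max (inner ℝ x e : ℝ) 0 ^ 2 * lap φ x) :=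
    (((hic.max continuous_const).pow 2).mul hlapc).integrable_of_hasCompactSupport hlaps.mul_left
  have hIlt : Integrable (fun x => 2 * (if (inner ℝ x e : ℝ) < 0 then (1:ℝ) else 0) * φ x) := by
    have hopen : MeasurableSet {x : EuclideanSpace ℝ (Fin (m+1)) | (inner ℝ x e : ℝ) < 0} :=
      (isOpen_lt hic continuous_const).measurableSet
    have h1 : Integrable (fun x : EuclideanSpace ℝ (Fin (m+1)) => 2 * φ x) :=
      (continuous_const.mul hφ.continuous).integrable_of_hasCompactSupport hφs.mul_left
    refine (h1.indicator hopen).congr ?_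
    filter_upwards with x
    rw [Set.indicator_apply]
    by_cases h : (inner ℝ x e : ℝ) < 0 <;> simp [h]
  have hIgt : Integrable (fun x => 2 * (if 0 < (inner ℝ x e : ℝ) then (1:ℝ) else 0) * φ x) := by
    have hopen : MeasurableSet {x : EuclideanSpace ℝ (Fin (m+1)) | 0 < (inner ℝ x e : ℝ)} :=
      (isOpen_lt continuous_const hic).measurableSet
    have h1 : Integrable (fun x : EuclideanSpace ℝ (Fin (m+1)) => 2 * φ x) :=
      (continuous_const.mul hφ.continuous).integrable_of_hasCompactSupport hφs.mul_left
    refine (h1.indicator hopen).congr ?_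
    filter_upwards with x
    rw [Set.indicator_apply]
    by_cases h : 0 < (inner ℝ x e : ℝ) <;> simp [h]
  calc ∫ x, (a * min (inner ℝ x e : ℝ) 0 ^ 2 + b * max (inner ℝ x e : ℝ) 0 ^ 2) * lap φ x
      = ∫ x, (a * (min (inner ℝ x e : ℝ) 0 ^ 2 * lap φ x)
          + b * (max (inner ℝ x e : ℝ) 0 ^ 2 * lap φ x)) := by
        refine integral_congr_ae (Filter.Eventually.of_forall fun x => ?_)
        ring
    _ = (a * ∫ x, min (inner ℝ x e : ℝ) 0 ^ 2 * lap φ x)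
          + b * ∫ x, max (inner ℝ x e : ℝ) 0 ^ 2 * lap φ x := by
        rw [integral_add (i1.const_mul a) (i2.const_mul b), integral_const_mul, integral_const_mul]
    _ = (a * ∫ x, 2 * (if (inner ℝ x e : ℝ) < 0 then (1:ℝ) else 0) * φ x)
          + b * ∫ x, 2 * (if 0 < (inner ℝ x e : ℝ) then (1:ℝ) else 0) * φ x := by
        rw [coreMin e he φ hφ hφs, coreMax e he φ hφ hφs]
    _ = ∫ x, (a * (2 * (if (inner ℝ x e : ℝ) < 0 then (1:ℝ) else 0) * φ x)
          + b * (2 * (if 0 < (inner ℝ x e : ℝ) then (1:ℝ) else 0) * φ x)) := by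
        rw [integral_add (hIlt.const_mul a) (hIgt.const_mul b), integral_const_mul, integral_const_mul]
    _ = ∫ x, (2 * a * (if (inner ℝ x e : ℝ) < 0 then (1:ℝ) else 0)
          + 2 * b * (if 0 < (inner ℝ x e : ℝ) then (1:ℝ) else 0)) * φ x := by
        refine integral_congr_ae (Filter.Eventually.of_forall fun x => ?_)
        ring

-- condition characterizations
lemma cond1 (t : ℝ) :
    (-(1/4) * min t 0 ^ 2 + (1/4) * max t 0 ^ 2 < (1/2) * min t 0 ^ 2 + (1/4) * max t 0 ^ 2)
      ↔ t < 0 := by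
  constructor
  · intro h
    by_contra hc
    push_neg at hc
    rw [min_eq_right hc] at h
    linarith
  · intro h
    have h2 : 0 < t ^ 2 := by nlinarith
    rw [min_eq_left h.le]
    nlinarith

lemma cond3 (t : ℝ) :
    (-(1/4) * min t 0 ^ 2 - (1/2) * max t 0 ^ 2 < -(1/4) * min t 0 ^ 2 + (1/4) * max t 0 ^ 2)
      ↔ 0 < t := by
  constructor
  · intro h
    by_contra hc
    push_neg at hc
    rw [max_eq_right hc] at h
    linarith
  · intro h
    have h2 : 0 < t ^ 2 := by nlinarith
    rw [max_eq_left h.le]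
    nlinarith

lemma cond2 (t : ℝ) :
    ((1/2) * min t 0 ^ 2 + (1/4) * max t 0 ^ 2 = -(1/4) * min t 0 ^ 2 + (1/4) * max t 0 ^ 2
      ∧ -(1/4) * min t 0 ^ 2 - (1/2) * max t 0 ^ 2 < -(1/4) * min t 0 ^ 2 + (1/4) * max t 0 ^ 2)
      ↔ 0 < t := by
  constructor
  · rintro ⟨-, h2⟩
    exact (cond3 t).mp h2
  · intro h
    refine ⟨by rw [min_eq_right h.le]; ring, (cond3 t).mpr h⟩

lemma cond4 (t : ℝ) :
    (-(1/4) * min t 0 ^ 2 + (1/4) * max t 0 ^ 2 < (1/2) * min t 0 ^ 2 + (1/4) * max t 0 ^ 2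
      ∧ -(1/4) * min t 0 ^ 2 + (1/4) * max t 0 ^ 2 = -(1/4) * min t 0 ^ 2 - (1/2) * max t 0 ^ 2)
      ↔ t < 0 := by
  constructor
  · rintro ⟨h1, -⟩
    exact (cond1 t).mp h1
  · intro h
    refine ⟨(cond1 t).mpr h, by rw [max_eq_right h.le]; ring⟩

end AuxDim

/-- The unstable half-space solution in direction `e` solves the 3-membrane problem
with forces (1,0,-1) on ℝᵈ. -/
theorem stmt1 (d : ℕ) (e : EuclideanSpace ℝ (Fin d)) (he : ‖e‖ = 1) :
    IsMembraneSolution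
      (fun x => (1/2) * (min (inner ℝ x e : ℝ) 0)^2 + (1/4) * (max (inner ℝ x e : ℝ) 0)^2)
      (fun x => -(1/4) * (min (inner ℝ x e : ℝ) 0)^2 + (1/4) * (max (inner ℝ x e : ℝ) 0)^2)
      (fun x => -(1/4) * (min (inner ℝ x e : ℝ) 0)^2 - (1/2) * (max (inner ℝ x e : ℝ) 0)^2)
      Set.univ := by
  obtain ⟨m, rfl⟩ : ∃ m, d = m + 1 := by
    cases d with
    | zero =>
        exfalso
        have h0 : e = 0 := Subsingleton.elim e 0
        rw [h0, norm_zero] at he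
        norm_num at he
    | succ n => exact ⟨n, rfl⟩
  have hic : Continuous fun x : EuclideanSpace ℝ (Fin (m+1)) => (inner ℝ x e : ℝ) :=
    continuous_id.inner continuous_const
  have hminc : Continuous fun x : EuclideanSpace ℝ (Fin (m+1)) => min (inner ℝ x e : ℝ) 0 ^ 2 :=
    (hic.min continuous_const).pow 2
  have hmaxc : Continuous fun x : EuclideanSpace ℝ (Fin (m+1)) => max (inner ℝ x e : ℝ) 0 ^ 2 :=
    (hic.max continuous_const).pow 2
  refine ⟨?_, ?_, ?_, ?_, ?_, ?_, ?_, ?_, ?_⟩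
  · exact (continuous_const.mul hminc).add (continuous_const.mul hmaxc)
  · exact (continuous_const.mul hminc).add (continuous_const.mul hmaxc)
  · exact (continuous_const.mul hminc).sub (continuous_const.mul hmaxc)
  · intro x _
    ring
  · intro x _
    simp only []
    nlinarith [sq_nonneg (min (inner ℝ x e : ℝ) 0)]
  · intro x _
    simp only []
    nlinarith [sq_nonneg (max (inner ℝ x e : ℝ) 0)]
  · intro φ hφ hcs _
    refine Eq.trans ?_ ((combo e he (1/2) (1/4) φ hφ hcs).trans ?_)
    · refine integral_congr_ae (Filter.Eventually.of_forall fun x => ?_)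
      beta_reduce
      ring
    · refine integral_congr_ae (Filter.Eventually.of_forall fun x => ?_)
      beta_reduce
      simp only [cond1, cond2]
      ring
  · intro φ hφ hcs _
    refine Eq.trans ?_ ((combo e he (-(1/4)) (1/4) φ hφ hcs).trans ?_)
    · refine integral_congr_ae (Filter.Eventually.of_forall fun x => ?_)
      beta_reduce
      ring
    · refine integral_congr_ae (Filter.Eventually.of_forall fun x => ?_)
      beta_reduce
      simp only [cond2, cond4]
      ring
  · intro φ hφ hcs _
    refine Eq.trans ?_ ((combo e he (-(1/4)) (-(1/2)) φ hφ hcs).trans ?_)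
    · refine integral_congr_ae (Filter.Eventually.of_forall fun x => ?_)
      beta_reduce
      ring
    · refine integral_congr_ae (Filter.Eventually.of_forall fun x => ?_)
      beta_reduce
      simp only [cond3, cond4]
      ring
end

section
/- Let α, β ∈ 𝕊^{d-1} and a, b ∈ ℝ with α₁ = β₁ > 0, α₂ = -β₂ ≥ 0, α_k = β_k = 0 for k ≥ 3. Define P(x) = ½max{x·α - a, 0}², and define Φ by: Φ = P on {x·α - a ≥ x·β - b}; on {x·α - a < x·β - b}, Φ = ¼max{x·β - b,0}² where (2α-β)·x < 2a-b and Φ = ½(x·α - a)² + ½(2α₂x₂ - a + b)² where (2α-β)·x ≥ 2a-b. Then Φ is C^{1,1} on ℝᵈ and |Φ - P| ≤ C(|α-β|² + |a-b|²) in B₁ for a dimensional constant C. -/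
open Metric

noncomputable def G1 (z : ℝ × ℝ) : ℝ := max (z.1 - max (z.2 - z.1) 0) 0
noncomputable def G2 (z : ℝ × ℝ) : ℝ := min (max (z.2 - z.1) 0) (max z.2 0 / 2)

noncomputable def Fr (z : ℝ × ℝ) : ℝ :=
  if z.2 ≤ z.1 then (1/2) * (max z.1 0)^2
  else if 2*z.1 < z.2 then (1/4) * (max z.2 0)^2
  else (1/2)*z.1^2 + (1/2)*(z.2 - z.1)^2

lemma Fr_A {u v : ℝ} (h : v ≤ u) : Fr (u, v) = (1/2) * (max u 0)^2 := by
  simp only [Fr]; rw [if_pos h]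

lemma Fr_B {u v : ℝ} (h1 : u < v) (h2 : 2*u < v) : Fr (u, v) = (1/4) * (max v 0)^2 := by
  simp only [Fr]; rw [if_neg (not_le.2 h1), if_pos h2]

lemma Fr_C {u v : ℝ} (h1 : u < v) (h2 : v ≤ 2*u) :
    Fr (u, v) = (1/2)*u^2 + (1/2)*(v - u)^2 := by
  simp only [Fr]; rw [if_neg (not_le.2 h1), if_neg (not_lt.2 h2)]

lemma regional (u v : ℝ) : ∃ w1 w2 : ℝ,
    G1 (u, v) = w1 - w2 ∧ G2 (u, v) = w2 ∧ Fr (u, v) = (1/2) * (w1^2 + w2^2) ∧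
    u - w1 ≤ 0 ∧ (u - w1) + (v - u - w2) ≤ 0 ∧
    ∀ k1 k2 : ℝ, k1 ≤ 0 → k1 + k2 ≤ 0 →
      0 ≤ w1 * ((u - w1) - k1) + w2 * ((v - u - w2) - k2) := by
  rcases le_or_gt v u with hA | hvu
  · have hs : max (v - u) 0 = 0 := max_eq_right (by linarith)
    have hG2 : G2 (u, v) = 0 := by
      simp only [G2]; simp only [hs]; exact min_eq_left (by positivity)
    rcases le_total u 0 with hu | hu
    · refine ⟨0, 0, ?_, by simpa using hG2, ?_, by linarith, by linarith, ?_⟩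
      · simp only [G1]; simp only [hs]; simp [max_eq_right hu]
      · rw [Fr_A hA, max_eq_right hu]; norm_num
      · intro k1 k2 h1 h2; nlinarith
    · refine ⟨u, 0, ?_, by simpa using hG2, ?_, by linarith, by linarith, ?_⟩
      · simp only [G1]; simp only [hs]; simp [max_eq_left hu]
      · rw [Fr_A hA, max_eq_left hu]; ring
      · intro k1 k2 h1 h2; nlinarith
  · have hs : max (v - u) 0 = v - u := max_eq_left (by linarith)
    rcases lt_or_ge (2*u) v with hB | hC
    · have hG1 : G1 (u, v) = 0 := by
        simp only [G1]; rw [hs]; exact max_eq_right (by linarith)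
      rcases le_total v 0 with hv | hv
      · refine ⟨0, 0, by simpa using hG1, ?_, ?_, by linarith, by linarith, ?_⟩
        · simp only [G2]; rw [hs, max_eq_right hv]
          norm_num
          linarith
        · rw [Fr_B hvu hB, max_eq_right hv]; norm_num
        · intro k1 k2 h1 h2; nlinarith
      · refine ⟨v/2, v/2, by simpa using hG1, ?_, ?_, by linarith, by linarith, ?_⟩
        · simp only [G2]; rw [hs, max_eq_left hv]
          exact min_eq_right (by linarith)
        · rw [Fr_B hvu hB, max_eq_left hv]; ring
        · intro k1 k2 h1 h2; nlinarith
    · have hu : 0 < u := by linarith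
      refine ⟨u, v - u, ?_, ?_, ?_, by linarith, by linarith, ?_⟩
      · simp only [G1]; rw [hs]
        rw [max_eq_left (by linarith)]
      · simp only [G2]; rw [hs, max_eq_left (by linarith)]
        exact min_eq_left (by linarith)
      · rw [Fr_C hvu hC]; ring
      · intro k1 k2 h1 h2
        nlinarith [mul_nonneg (by linarith : (0:ℝ) ≤ -k1) (by linarith : (0:ℝ) ≤ 2*u - v),
          mul_nonneg (by linarith : (0:ℝ) ≤ v - u) (by linarith : (0:ℝ) ≤ -k1 - k2)]

lemma F4 (u v k1 k2 : ℝ) (h1 : k1 ≤ 0) (h2 : k1 + k2 ≤ 0) :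
    Fr (u, v) ≤ (1/2) * ((u - k1)^2 + (v - u - k2)^2) := by
  rcases le_or_gt v u with hA | hvu
  · rw [Fr_A hA]
    rcases le_total u 0 with hu | hu
    · rw [max_eq_right hu]; norm_num; positivity
    · rw [max_eq_left hu]
      nlinarith [sq_nonneg (v - u - k2), mul_nonneg hu (by linarith : (0:ℝ) ≤ -k1), sq_nonneg k1]
  · rcases lt_or_ge (2*u) v with hB | hC
    · rw [Fr_B hvu hB]
      rcases le_total v 0 with hv | hv
      · rw [max_eq_right hv]; norm_num; positivity
      · rw [max_eq_left hv]
        nlinarith [sq_nonneg ((u - k1) - (v - u - k2)),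
          mul_nonneg hv (by linarith : (0:ℝ) ≤ -(k1 + k2)), sq_nonneg (k1 + k2)]
    · rw [Fr_C hvu hC]
      nlinarith [mul_nonneg (by linarith : (0:ℝ) ≤ -k1) (by linarith : (0:ℝ) ≤ 2*u - v),
        mul_nonneg (by linarith : (0:ℝ) ≤ v - u) (by linarith : (0:ℝ) ≤ -k1 - k2),
        sq_nonneg k1, sq_nonneg k2]

lemma key (u v u' v' : ℝ) :
    0 ≤ Fr (u', v') - Fr (u, v) - G1 (u, v) * (u' - u) - G2 (u, v) * (v' - v) ∧
    Fr (u', v') - Fr (u, v) - G1 (u, v) * (u' - u) - G2 (u, v) * (v' - v)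
      ≤ 3 * ((u' - u)^2 + (v' - v)^2) := by
  obtain ⟨w1, w2, hG1, hG2, hF, hk1, hk12, hVI⟩ := regional u v
  obtain ⟨w1', w2', hG1', hG2', hF', hk1', hk12', hVI'⟩ := regional u' v'
  have hVIspec := hVI (u' - w1') (v' - u' - w2') hk1' hk12'
  have hF4 := F4 u' v' (u - w1) (v - u - w2) hk1 hk12
  rw [hF'] at hF4
  constructor
  · rw [hF, hF', hG1, hG2]
    nlinarith [sq_nonneg (w1' - w1), sq_nonneg (w2' - w2), hVIspec]
  · rw [hF, hF', hG1, hG2]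
    nlinarith [hF4, sq_nonneg (u' - u + (v' - v))]

noncomputable def DFr (z : ℝ × ℝ) : ℝ × ℝ →L[ℝ] ℝ :=
  G1 z • ContinuousLinearMap.fst ℝ ℝ ℝ + G2 z • ContinuousLinearMap.snd ℝ ℝ ℝ

lemma DFr_apply (z h : ℝ × ℝ) : DFr z h = G1 z * h.1 + G2 z * h.2 := by
  simp [DFr]

lemma hasFDerivAt_Fr (z : ℝ × ℝ) : HasFDerivAt Fr (DFr z) z := by
  rw [hasFDerivAt_iff_isLittleO_nhds_zero, Asymptotics.isLittleO_iff]
  intro ε hε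
  have h6 : (0:ℝ) < ε/6 := by linarith
  filter_upwards [Metric.ball_mem_nhds (0 : ℝ × ℝ) h6] with h hh
  have hb : ‖h‖ < ε/6 := by simpa [mem_ball, dist_zero_right] using hh
  have hz : z + h = (z.1 + h.1, z.2 + h.2) := rfl
  have hzz : z = (z.1, z.2) := rfl
  have hk := key z.1 z.2 (z.1 + h.1) (z.2 + h.2)
  rw [← hzz] at hk
  have h1 : |h.1| ≤ ‖h‖ := by
    have := norm_fst_le h; simpa [Real.norm_eq_abs] using this
  have h2 : |h.2| ≤ ‖h‖ := by
    have := norm_snd_le h; simpa [Real.norm_eq_abs] using this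
  have hsq1 : h.1^2 ≤ ‖h‖^2 := by nlinarith [abs_nonneg h.1, sq_abs h.1]
  have hsq2 : h.2^2 ≤ ‖h‖^2 := by nlinarith [abs_nonneg h.2, sq_abs h.2]
  rw [hz, DFr_apply, Real.norm_eq_abs, abs_le]
  have hn : (0:ℝ) ≤ ‖h‖ := norm_nonneg h
  constructor
  · have hlow : 0 ≤ Fr (z.1 + h.1, z.2 + h.2) - Fr z - G1 z * h.1 - G2 z * h.2 := by
      have := hk.1; ring_nf at this ⊢; linarith
    nlinarith [mul_nonneg hε.le hn]
  · have hup : Fr (z.1 + h.1, z.2 + h.2) - Fr z - G1 z * h.1 - G2 z * h.2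
        ≤ 3 * (h.1^2 + h.2^2) := by
      have := hk.2; ring_nf at this ⊢; linarith
    nlinarith [mul_le_mul_of_nonneg_right hb.le hn]

lemma absG1 (z z' : ℝ × ℝ) : |G1 z - G1 z'| ≤ 2*|z.1 - z'.1| + |z.2 - z'.2| := by
  have h1 : |G1 z - G1 z'| ≤ |(z.1 - max (z.2 - z.1) 0) - (z'.1 - max (z'.2 - z'.1) 0)| := by
    refine (abs_max_sub_max_le_max (z.1 - max (z.2 - z.1) 0) 0
      (z'.1 - max (z'.2 - z'.1) 0) 0).trans ?_; simp
  calc |G1 z - G1 z'| ≤ |(z.1 - z'.1)| + |max (z.2 - z.1) 0 - max (z'.2 - z'.1) 0| := by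
        refine h1.trans ?_
        calc |(z.1 - max (z.2 - z.1) 0) - (z'.1 - max (z'.2 - z'.1) 0)|
            = |(z.1 - z'.1) - (max (z.2 - z.1) 0 - max (z'.2 - z'.1) 0)| := by ring_nf
          _ ≤ _ := abs_sub _ _
    _ ≤ |z.1 - z'.1| + |(z.2 - z.1) - (z'.2 - z'.1)| := by
        have := abs_max_sub_max_le_max (z.2 - z.1) 0 (z'.2 - z'.1) 0
        simp only [sub_zero, abs_zero] at this
        have h2 : |max (z.2 - z.1) 0 - max (z'.2 - z'.1) 0| ≤ |(z.2 - z.1) - (z'.2 - z'.1)| := by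
          simpa using abs_max_sub_max_le_max (z.2 - z.1) 0 (z'.2 - z'.1) 0
        linarith
    _ ≤ 2*|z.1 - z'.1| + |z.2 - z'.2| := by
        have e : (z.2 - z.1) - (z'.2 - z'.1) = (z.2 - z'.2) - (z.1 - z'.1) := by ring
        rw [e]; linarith [abs_sub (z.2 - z'.2) (z.1 - z'.1)]

lemma absG2 (z z' : ℝ × ℝ) : |G2 z - G2 z'| ≤ |z.1 - z'.1| + |z.2 - z'.2| := by
  have h1 : |G2 z - G2 z'| ≤ max (|max (z.2 - z.1) 0 - max (z'.2 - z'.1) 0|)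
      (|max z.2 0 / 2 - max z'.2 0 / 2|) :=
    abs_min_sub_min_le_max _ _ _ _
  have h2 : |max (z.2 - z.1) 0 - max (z'.2 - z'.1) 0| ≤ |z.1 - z'.1| + |z.2 - z'.2| := by
    have e : (z.2 - z.1) - (z'.2 - z'.1) = (z.2 - z'.2) - (z.1 - z'.1) := by ring
    calc |max (z.2 - z.1) 0 - max (z'.2 - z'.1) 0|
        ≤ |(z.2 - z.1) - (z'.2 - z'.1)| := by
          simpa using abs_max_sub_max_le_max (z.2 - z.1) 0 (z'.2 - z'.1) 0
      _ ≤ |z.1 - z'.1| + |z.2 - z'.2| := by rw [e]; linarith [abs_sub (z.2 - z'.2) (z.1 - z'.1)]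
  have h3 : |max z.2 0 / 2 - max z'.2 0 / 2| ≤ |z.1 - z'.1| + |z.2 - z'.2| := by
    have h4 : |max z.2 0 - max z'.2 0| ≤ |z.2 - z'.2| := by
      simpa using abs_max_sub_max_le_max z.2 0 z'.2 0
    have e : max z.2 0 / 2 - max z'.2 0 / 2 = (max z.2 0 - max z'.2 0)/2 := by ring
    rw [e, abs_div]
    have h5 : |max z.2 0 - max z'.2 0| / |(2:ℝ)| ≤ |z.2 - z'.2| / 2 := by
      rw [abs_two]; linarith
    linarith [abs_nonneg (z.1 - z'.1), abs_nonneg (z.2 - z'.2), h5]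
  exact h1.trans (max_le h2 h3)

lemma norm_DFr_sub (z z' : ℝ × ℝ) : ‖DFr z - DFr z'‖ ≤ |G1 z - G1 z'| + |G2 z - G2 z'| := by
  refine ContinuousLinearMap.opNorm_le_bound _ (by positivity) (fun h => ?_)
  have happ : (DFr z - DFr z') h = (G1 z - G1 z') * h.1 + (G2 z - G2 z') * h.2 := by
    simp [DFr]; ring
  rw [happ, Real.norm_eq_abs]
  have h1 : |h.1| ≤ ‖h‖ := by simpa [Real.norm_eq_abs] using norm_fst_le h
  have h2 : |h.2| ≤ ‖h‖ := by simpa [Real.norm_eq_abs] using norm_snd_le h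
  calc |(G1 z - G1 z') * h.1 + (G2 z - G2 z') * h.2|
      ≤ |(G1 z - G1 z') * h.1| + |(G2 z - G2 z') * h.2| := abs_add_le _ _
    _ = |G1 z - G1 z'| * |h.1| + |G2 z - G2 z'| * |h.2| := by rw [abs_mul, abs_mul]
    _ ≤ |G1 z - G1 z'| * ‖h‖ + |G2 z - G2 z'| * ‖h‖ := by gcongr
    _ = (|G1 z - G1 z'| + |G2 z - G2 z'|) * ‖h‖ := by ring

lemma dist_DFr (z z' : ℝ × ℝ) : dist (DFr z) (DFr z') ≤ 5 * dist z z' := by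
  rw [dist_eq_norm]
  have e1 : |z.1 - z'.1| ≤ dist z z' := by
    rw [Prod.dist_eq]; simpa [Real.dist_eq] using le_max_left (dist z.1 z'.1) (dist z.2 z'.2)
  have e2 : |z.2 - z'.2| ≤ dist z z' := by
    rw [Prod.dist_eq]; simpa [Real.dist_eq] using le_max_right (dist z.1 z'.1) (dist z.2 z'.2)
  have := norm_DFr_sub z z'
  linarith [absG1 z z', absG2 z z']

lemma estB (u v : ℝ) (h : u < v) (h2 : 2*u < v) :
    |(1/4) * (max v 0)^2 - (1/2) * (max u 0)^2| ≤ (v - u)^2 := by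
  rcases le_total v 0 with hv | hv
  · have hu : u ≤ 0 := by linarith
    rw [max_eq_right hv, max_eq_right hu]
    norm_num
    positivity
  · rw [max_eq_left hv]
    rcases le_total u 0 with hu | hu
    · rw [max_eq_right hu, abs_le]
      constructor <;> nlinarith
    · rw [max_eq_left hu, abs_le]
      constructor <;> nlinarith

lemma estAll (u v R : ℝ) (hR : (v - u)^2 ≤ R) :
    |Fr (u, v) - (1/2) * (max u 0)^2| ≤ R := by
  have hR0 : 0 ≤ R := le_trans (sq_nonneg _) hR
  rcases le_or_gt v u with h | h
  · rw [Fr_A h]; simpa using hR0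
  · rcases lt_or_ge (2*u) v with h2 | h2
    · rw [Fr_B h h2]
      exact le_trans (estB u v h h2) hR
    · rw [Fr_C h h2]
      have hu : 0 < u := by linarith
      rw [max_eq_left hu.le]
      have e : (1/2)*u^2 + (1/2)*(v - u)^2 - (1/2)*u^2 = (1/2)*(v-u)^2 := by ring
      rw [e, abs_of_nonneg (by positivity)]
      nlinarith [sq_nonneg (v - u)]

set_option maxHeartbeats 1000000 in
/-- The first component `Φ` of the approximate solution corresponding to stable
half-space profiles: `Φ` is `C^{1,1}` and `|Φ - P| ≤ C(|α-β|² + |a-b|²)` in `B₁`. -/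
theorem stmt16 (d : ℕ) (hd : 2 ≤ d) : ∃ C > (0:ℝ),
    ∀ (α β : EuclideanSpace ℝ (Fin d)) (a b : ℝ),
    ‖α‖ = 1 → ‖β‖ = 1 →
    α ⟨0, by omega⟩ = β ⟨0, by omega⟩ → 0 < α ⟨0, by omega⟩ →
    α ⟨1, by omega⟩ = -β ⟨1, by omega⟩ → 0 ≤ α ⟨1, by omega⟩ →
    (∀ k : Fin d, 2 ≤ (k : ℕ) → α k = 0 ∧ β k = 0) →
    ∀ P Φ : EuclideanSpace ℝ (Fin d) → ℝ,
    (∀ x, P x = (1/2) * (max ((inner ℝ x α : ℝ) - a) 0)^2) →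
    (∀ x, (inner ℝ x β : ℝ) - b ≤ (inner ℝ x α : ℝ) - a → Φ x = P x) →
    (∀ x, (inner ℝ x α : ℝ) - a < (inner ℝ x β : ℝ) - b →
      ((inner ℝ x ((2:ℝ) • α - β) : ℝ) < 2*a - b →
        Φ x = (1/4) * (max ((inner ℝ x β : ℝ) - b) 0)^2) ∧
      (2*a - b ≤ (inner ℝ x ((2:ℝ) • α - β) : ℝ) →
        Φ x = (1/2) * ((inner ℝ x α : ℝ) - a)^2
          + (1/2) * (2 * α ⟨1, by omega⟩ * x ⟨1, by omega⟩ - a + b)^2)) →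
    (ContDiff ℝ 1 Φ ∧ ∃ L : NNReal, LipschitzWith L (fderiv ℝ Φ)) ∧
    ∀ x ∈ ball (0 : EuclideanSpace ℝ (Fin d)) 1,
      |Φ x - P x| ≤ C * (‖α - β‖^2 + |a - b|^2) := by
  refine ⟨2, by norm_num, ?_⟩
  intro α β a b hα hβ h01 h0pos h1neg h1nonneg hk23 P Φ hP hRA hRBC
  have hlin : ∀ x : EuclideanSpace ℝ (Fin d),
      (inner ℝ x ((2:ℝ) • α - β) : ℝ) = 2 * (inner ℝ x α : ℝ) - (inner ℝ x β : ℝ) := by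
    intro x; rw [inner_sub_right, real_inner_smul_right]
  have hcoord : ∀ x : EuclideanSpace ℝ (Fin d),
      2 * α ⟨1, by omega⟩ * x ⟨1, by omega⟩ = (inner ℝ x α : ℝ) - (inner ℝ x β : ℝ) := by
    intro x
    rw [← inner_sub_right]
    have hsum : (inner ℝ x (α - β) : ℝ) = ∑ i : Fin d, x i * (α i - β i) := by
      rw [PiLp.inner_apply]
      apply Finset.sum_congr rfl
      intro i _
      simp [RCLike.inner_apply]; ring
    rw [hsum, Finset.sum_eq_single (⟨1, by omega⟩ : Fin d)]
    · rw [h1neg]; ring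
    · intro j _ hj
      have hv : (j : ℕ) ≠ 1 := fun h => hj (Fin.ext h)
      rcases (by omega : (j:ℕ) = 0 ∨ 2 ≤ (j:ℕ)) with h | h
      · have hj0 : j = ⟨0, by omega⟩ := Fin.ext h
        rw [hj0, h01]; ring
      · rw [(hk23 j h).1, (hk23 j h).2]; ring
    · intro h; exact absurd (Finset.mem_univ _) h
  set A : EuclideanSpace ℝ (Fin d) →L[ℝ] ℝ × ℝ := (innerSL ℝ α).prod (innerSL ℝ β) with hAdef
  have hAx : ∀ x, A x - (a, b) = ((inner ℝ x α : ℝ) - a, (inner ℝ x β : ℝ) - b) := by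
    intro x
    have h0 : A x = ((inner ℝ α x : ℝ), (inner ℝ β x : ℝ)) := rfl
    rw [h0, Prod.mk_sub_mk, real_inner_comm α x, real_inner_comm β x]
  have hmatch : ∀ x, Φ x = Fr (A x - (a, b)) := by
    intro x
    rw [hAx x]
    rcases le_or_gt ((inner ℝ x β : ℝ) - b) ((inner ℝ x α : ℝ) - a) with h | h
    · rw [hRA x h, hP x, Fr_A h]
    · obtain ⟨hB', hC'⟩ := hRBC x h
      rcases lt_or_ge (2*((inner ℝ x α : ℝ) - a)) ((inner ℝ x β : ℝ) - b) with h2 | h2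
      · rw [hB' (by rw [hlin x]; linarith), Fr_B h h2]
      · rw [hC' (by rw [hlin x]; linarith), Fr_C h h2]
        have he : 2 * α ⟨1, by omega⟩ * x ⟨1, by omega⟩ - a + b
            = ((inner ℝ x α : ℝ) - a) - ((inner ℝ x β : ℝ) - b) := by rw [hcoord x]; ring
        rw [he]; ring
  have hΦ : Φ = fun x => Fr (A x - (a, b)) := funext hmatch
  subst hΦ
  have hD : ∀ x, HasFDerivAt (fun y => Fr (A y - (a, b)))
      ((DFr (A x - (a, b))).comp (A : EuclideanSpace ℝ (Fin d) →L[ℝ] ℝ × ℝ)) x := by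
    intro x
    have h1 : HasFDerivAt (fun y : EuclideanSpace ℝ (Fin d) => A y - (a, b))
        (A : EuclideanSpace ℝ (Fin d) →L[ℝ] ℝ × ℝ) x := (A.hasFDerivAt).sub_const (a, b)
    exact (hasFDerivAt_Fr (A x - (a, b))).comp x h1
  have hfd : (fderiv ℝ fun y => Fr (A y - (a, b)))
      = fun x => (DFr (A x - (a, b))).comp A := funext fun x => (hD x).fderiv
  have hAnorm : ‖A‖ ≤ 1 := by
    refine A.opNorm_le_bound zero_le_one (fun h => ?_)
    rw [one_mul]
    have hA1 : ‖(inner ℝ α h : ℝ)‖ ≤ ‖h‖ := by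
      rw [Real.norm_eq_abs]
      calc |(inner ℝ α h : ℝ)| ≤ ‖α‖ * ‖h‖ := abs_real_inner_le_norm _ _
        _ = ‖h‖ := by rw [hα, one_mul]
    have hA2 : ‖(inner ℝ β h : ℝ)‖ ≤ ‖h‖ := by
      rw [Real.norm_eq_abs]
      calc |(inner ℝ β h : ℝ)| ≤ ‖β‖ * ‖h‖ := abs_real_inner_le_norm _ _
        _ = ‖h‖ := by rw [hβ, one_mul]
    calc ‖A h‖ = max ‖(inner ℝ α h : ℝ)‖ ‖(inner ℝ β h : ℝ)‖ := by
          rw [hAdef]; rfl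
      _ ≤ ‖h‖ := max_le hA1 hA2
  have hlipf : ∀ x y, dist ((DFr (A x - (a, b))).comp A) ((DFr (A y - (a, b))).comp A)
      ≤ 5 * dist x y := by
    intro x y
    rw [dist_eq_norm, ← ContinuousLinearMap.sub_comp]
    have h1 : ‖(DFr (A x - (a, b)) - DFr (A y - (a, b))).comp A‖
        ≤ ‖DFr (A x - (a, b)) - DFr (A y - (a, b))‖ * ‖A‖ :=
      ContinuousLinearMap.opNorm_comp_le _ _
    have h2 : ‖DFr (A x - (a, b)) - DFr (A y - (a, b))‖ ≤ 5 * dist (A x - (a, b)) (A y - (a, b)) := by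
      rw [← dist_eq_norm]; exact dist_DFr _ _
    have h3 : dist (A x - (a, b)) (A y - (a, b)) = dist (A x) (A y) := dist_sub_right _ _ _
    have h4 : dist (A x) (A y) ≤ ‖A‖ * dist x y := by
      rw [dist_eq_norm, dist_eq_norm, ← map_sub]
      exact A.le_opNorm _
    have h5 : (0:ℝ) ≤ dist x y := dist_nonneg
    have h6 : (0:ℝ) ≤ ‖A‖ := norm_nonneg A
    have h7 : ‖A‖ * dist x y ≤ dist x y := by nlinarith
    have h9 : dist (A x - (a, b)) (A y - (a, b)) ≤ dist x y := by
      rw [h3]; linarith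
    have h8 : ‖DFr (A x - (a, b)) - DFr (A y - (a, b))‖ * ‖A‖ ≤ (5 * dist x y) * 1 := by
      apply mul_le_mul _ hAnorm h6 (by positivity)
      linarith
    linarith
  have hlip : LipschitzWith 5 (fun x => (DFr (A x - (a, b))).comp A) :=
    LipschitzWith.of_dist_le_mul (by exact_mod_cast hlipf)
  refine ⟨⟨?_, ⟨5, by rw [hfd]; exact hlip⟩⟩, ?_⟩
  · rw [contDiff_one_iff_fderiv]
    refine ⟨fun x => (hD x).differentiableAt, ?_⟩
    rw [hfd]
    exact hlip.continuous
  · intro x hx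
    have hbeta : (fun x => Fr (A x - (a, b))) x = Fr ((inner ℝ x α : ℝ) - a, (inner ℝ x β : ℝ) - b) := by
      simp only [hAx x]
    rw [hbeta, hP x]
    have hx1 : ‖x‖ ≤ 1 := le_of_lt (mem_ball_zero_iff.mp hx)
    have hi : (inner ℝ x (β - α) : ℝ) = (inner ℝ x β : ℝ) - (inner ℝ x α : ℝ) := inner_sub_right _ _ _
    have h2 : |(inner ℝ x (β - α) : ℝ)| ≤ ‖x‖ * ‖β - α‖ := abs_real_inner_le_norm _ _
    have h3 : ‖β - α‖ = ‖α - β‖ := norm_sub_rev _ _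
    have hM : |((inner ℝ x β : ℝ) - b) - ((inner ℝ x α : ℝ) - a)| ≤ ‖α - β‖ + |a - b| := by
      have e : ((inner ℝ x β : ℝ) - b) - ((inner ℝ x α : ℝ) - a)
          = (inner ℝ x (β - α) : ℝ) + (a - b) := by rw [hi]; ring
      rw [e]
      calc |(inner ℝ x (β - α) : ℝ) + (a - b)| ≤ |(inner ℝ x (β - α) : ℝ)| + |a - b| := abs_add_le _ _
        _ ≤ ‖α - β‖ + |a - b| := by
            have h9 : ‖x‖ * ‖β - α‖ ≤ ‖β - α‖ := by nlinarith [norm_nonneg (β - α)]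
            have h10 : |(inner ℝ x (β - α) : ℝ)| ≤ ‖α - β‖ := by rw [← h3]; linarith
            linarith
    have hM2 : (((inner ℝ x β : ℝ) - b) - ((inner ℝ x α : ℝ) - a))^2
        ≤ 2 * (‖α - β‖^2 + |a - b|^2) := by
      nlinarith [hM, abs_nonneg (((inner ℝ x β : ℝ) - b) - ((inner ℝ x α : ℝ) - a)),
        sq_abs (((inner ℝ x β : ℝ) - b) - ((inner ℝ x α : ℝ) - a)),
        sq_nonneg (‖α - β‖ - |a - b|),
        mul_self_le_mul_self (abs_nonneg (((inner ℝ x β : ℝ) - b) - ((inner ℝ x α : ℝ) - a))) hM]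
    exact estAll _ _ _ hM2
end
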